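/- Let U_A be a unitary on ℂ^{2^m} ⊗ H that block-encodes A, i.e. A = (⟨0^m| ⊗ I) U_A (|0^m⟩ ⊗ I), and suppose ‖A − V‖ ≤ ε for some unitary V on H. Define the channel Λ(ρ) := Σ_i (⟨i| ⊗ I) U_A (|0^m⟩⟨0^m| ⊗ ρ) U_A† (|i⟩ ⊗ I). Then for every density matrix ρ (and with an identity channel tensored on an auxiliary system), ‖(Λ ⊗ I)(σ) − ((V·V†) ⊗ I)(σ)‖₁ ≤ 4ε for all density matrices σ, i.e. ‖Λ − V·V†‖_⋄ ≤ 4ε. -/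

import Mathlib

open scoped Matrix
open scoped Matrix.Norms.L2Operator
open scoped Kronecker
open scoped ComplexOrder

/-- The trace norm of a complex square matrix (sum of singular values). -/
noncomputable def traceNorm {ι : Type*} [Fintype ι] [DecidableEq ι] (M : Matrix ι ι ℂ) : ℝ :=
  ∑ i, Real.sqrt ((Matrix.isHermitian_mul_conjTranspose_self Mᴴ).eigenvalues i)


section Helpers


set_option linter.unusedSectionVars false
namespace TN

variable {n : Type*} [Fintype n] [DecidableEq n]

lemma star_mul_self_re (z : ℂ) : (star z * z).re = ‖z‖ ^ 2 := by
  rw [Complex.star_def, mul_comm, Complex.mul_conj]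
  simp [Complex.normSq_eq_norm_sq, ← Complex.ofReal_pow]

lemma sum_normSq_eq (y : n → ℂ) : ∑ i, ‖y i‖ ^ 2 = (dotProduct (star y) y).re := by
  rw [dotProduct, Complex.re_sum]
  exact Finset.sum_congr rfl fun i _ => (star_mul_self_re (y i)).symm

lemma norm_equiv_symm (y : n → ℂ) :
    ‖(EuclideanSpace.equiv n ℂ).symm y‖ = Real.sqrt (∑ i, ‖y i‖ ^ 2) := by
  rw [EuclideanSpace.norm_eq]
  rfl

lemma mulVec_norm_unitary {U : Matrix n n ℂ} (hU : U ∈ Matrix.unitaryGroup n ℂ) (x : n → ℂ) :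
    ∑ i, ‖(U *ᵥ x) i‖ ^ 2 = ∑ i, ‖x i‖ ^ 2 := by
  rw [sum_normSq_eq, sum_normSq_eq]
  congr 1
  rw [Matrix.star_mulVec, Matrix.dotProduct_mulVec, Matrix.vecMul_vecMul]
  rw [show star x ᵥ* (Uᴴ * U) = star x ᵥ* 1 by
    rw [← Matrix.star_eq_conjTranspose, (Matrix.mem_unitaryGroup_iff').mp hU]]
  rw [Matrix.vecMul_one]

lemma l2_opNorm_le_of {A : Matrix n n ℂ} {c : ℝ} (hc : 0 ≤ c)
    (h : ∀ x : EuclideanSpace ℂ n, ‖(EuclideanSpace.equiv n ℂ).symm (A *ᵥ x)‖ ≤ c * ‖x‖) :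
    ‖A‖ ≤ c := by
  rw [Matrix.l2_opNorm_def]
  exact ContinuousLinearMap.opNorm_le_bound _ hc fun x => h x

lemma l2_opNorm_unitary {U : Matrix n n ℂ} (hU : U ∈ Matrix.unitaryGroup n ℂ) : ‖U‖ ≤ 1 := by
  refine l2_opNorm_le_of zero_le_one fun x => ?_
  rw [one_mul, norm_equiv_symm]
  rw [show ‖x‖ = ‖(EuclideanSpace.equiv n ℂ).symm (x : n → ℂ)‖ from rfl, norm_equiv_symm]
  rw [mulVec_norm_unitary hU]

end TN


set_option maxHeartbeats 1000000
namespace TN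
variable {n : Type*} [Fintype n] [DecidableEq n]

lemma sq_norm_equiv (y : n → ℂ) :
    ‖(EuclideanSpace.equiv n ℂ).symm y‖ ^ 2 = ∑ i, ‖y i‖ ^ 2 := by
  rw [norm_equiv_symm, Real.sq_sqrt]; positivity

lemma kron_one_mulVec {κ : Type*} [Fintype κ] [DecidableEq κ] (M : Matrix n n ℂ)
    (x : n × κ → ℂ) (j : n) (k : κ) :
    ((M ⊗ₖ (1 : Matrix κ κ ℂ)) *ᵥ x) (j, k) = (M *ᵥ fun j' => x (j', k)) j := by
  simp [Matrix.mulVec, dotProduct, Fintype.sum_prod_type, Matrix.one_apply,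
    mul_ite, mul_zero, ite_mul, zero_mul, Finset.sum_ite_eq, Finset.sum_ite_eq']

lemma kron_sum_le {κ : Type*} [Fintype κ] [DecidableEq κ] (M : Matrix n n ℂ) (x : n × κ → ℂ) :
    ∑ p : n × κ, ‖((M ⊗ₖ (1 : Matrix κ κ ℂ)) *ᵥ x) p‖ ^ 2
      ≤ ‖M‖ ^ 2 * ∑ p : n × κ, ‖x p‖ ^ 2 := by
  have hx : ∑ p : n × κ, ‖x p‖ ^ 2 = ∑ k, ∑ j, ‖x (j, k)‖ ^ 2 := by
    rw [Fintype.sum_prod_type]; exact Finset.sum_comm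
  rw [hx, Fintype.sum_prod_type]
  rw [show ∑ j, ∑ k, ‖((M ⊗ₖ (1 : Matrix κ κ ℂ)) *ᵥ x) (j, k)‖ ^ 2
      = ∑ k, ∑ j, ‖((M ⊗ₖ (1 : Matrix κ κ ℂ)) *ᵥ x) (j, k)‖ ^ 2 from Finset.sum_comm]
  rw [Finset.mul_sum]
  refine Finset.sum_le_sum fun k _ => ?_
  have h1 : ∑ j, ‖((M ⊗ₖ (1 : Matrix κ κ ℂ)) *ᵥ x) (j, k)‖ ^ 2
      = ‖(EuclideanSpace.equiv n ℂ).symm (M *ᵥ fun j' => x (j', k))‖ ^ 2 := by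
    rw [sq_norm_equiv]
    exact Finset.sum_congr rfl fun j _ => by rw [kron_one_mulVec]
  rw [h1]
  have h2 := Matrix.l2_opNorm_mulVec M ((EuclideanSpace.equiv n ℂ).symm fun j' => x (j', k))
  calc ‖(EuclideanSpace.equiv n ℂ).symm (M *ᵥ fun j' => x (j', k))‖ ^ 2
      ≤ (‖M‖ * ‖(EuclideanSpace.equiv n ℂ).symm fun j' => x (j', k)‖) ^ 2 :=
        pow_le_pow_left₀ (norm_nonneg _) h2 2
    _ = ‖M‖ ^ 2 * ∑ j, ‖x (j, k)‖ ^ 2 := by rw [mul_pow, sq_norm_equiv]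

lemma l2_opNorm_kron_one {κ : Type*} [Fintype κ] [DecidableEq κ] (M : Matrix n n ℂ) :
    ‖M ⊗ₖ (1 : Matrix κ κ ℂ)‖ ≤ ‖M‖ := by
  refine l2_opNorm_le_of (norm_nonneg M) fun x => ?_
  calc ‖(EuclideanSpace.equiv (n × κ) ℂ).symm ((M ⊗ₖ (1 : Matrix κ κ ℂ)) *ᵥ x)‖
      = Real.sqrt (∑ p : n × κ, ‖((M ⊗ₖ (1 : Matrix κ κ ℂ)) *ᵥ x) p‖ ^ 2) := norm_equiv_symm _
    _ ≤ Real.sqrt (‖M‖ ^ 2 * ∑ p : n × κ, ‖(x : n × κ → ℂ) p‖ ^ 2) :=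
        Real.sqrt_le_sqrt (kron_sum_le M x)
    _ = ‖M‖ * ‖x‖ := by
        rw [Real.sqrt_mul (sq_nonneg _), Real.sqrt_sq (norm_nonneg M)]
        congr 1
        rw [show ‖x‖ = ‖(EuclideanSpace.equiv (n × κ) ℂ).symm (x : n × κ → ℂ)‖ from rfl,
          norm_equiv_symm]

lemma block_sum_le {α : Type*} [Fintype α] [DecidableEq α] (a₀ : α)
    (U : Matrix (α × n) (α × n) ℂ) (hU : U ∈ Matrix.unitaryGroup (α × n) ℂ)
    (A : Matrix n n ℂ) (hA : ∀ i j, A i j = U (a₀, i) (a₀, j)) (x : n → ℂ) :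
    ∑ i, ‖(A *ᵥ x) i‖ ^ 2 ≤ ∑ i, ‖x i‖ ^ 2 := by
  set y : α × n → ℂ := fun p => if p.1 = a₀ then x p.2 else 0 with hy
  have hAx : ∀ i, (A *ᵥ x) i = (U *ᵥ y) (a₀, i) := by
    intro i
    simp only [Matrix.mulVec, dotProduct, Fintype.sum_prod_type, hy, mul_ite, mul_zero]
    simp [hA, Finset.sum_ite_eq', Finset.sum_ite_eq]
  calc ∑ i, ‖(A *ᵥ x) i‖ ^ 2 = ∑ i, ‖(U *ᵥ y) (a₀, i)‖ ^ 2 :=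
        Finset.sum_congr rfl fun i _ => by rw [hAx]
    _ ≤ ∑ a, ∑ i, ‖(U *ᵥ y) (a, i)‖ ^ 2 :=
        Finset.single_le_sum (f := fun a => ∑ i, ‖(U *ᵥ y) (a, i)‖ ^ 2)
          (fun a _ => by positivity) (Finset.mem_univ a₀)
    _ = ∑ p : α × n, ‖(U *ᵥ y) p‖ ^ 2 := by rw [Fintype.sum_prod_type]
    _ = ∑ p : α × n, ‖y p‖ ^ 2 := mulVec_norm_unitary hU y
    _ = ∑ i, ‖x i‖ ^ 2 := by
        simp [hy, Fintype.sum_prod_type, apply_ite (‖·‖), Finset.sum_ite_eq, Finset.sum_ite_eq']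

lemma l2_opNorm_block {α : Type*} [Fintype α] [DecidableEq α] (a₀ : α)
    (U : Matrix (α × n) (α × n) ℂ) (hU : U ∈ Matrix.unitaryGroup (α × n) ℂ)
    (A : Matrix n n ℂ) (hA : ∀ i j, A i j = U (a₀, i) (a₀, j)) : ‖A‖ ≤ 1 := by
  refine l2_opNorm_le_of zero_le_one fun x => ?_
  rw [one_mul]
  calc ‖(EuclideanSpace.equiv n ℂ).symm (A *ᵥ x)‖
      = Real.sqrt (∑ i, ‖(A *ᵥ (x : n → ℂ)) i‖ ^ 2) := norm_equiv_symm _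
    _ ≤ Real.sqrt (∑ i, ‖(x : n → ℂ) i‖ ^ 2) := Real.sqrt_le_sqrt (block_sum_le a₀ U hU A hA x)
    _ = ‖x‖ := (norm_equiv_symm _).symm

end TN

namespace TN
variable {n : Type*} [Fintype n] [DecidableEq n]
open scoped MatrixOrder

lemma trace_bound {σ M : Matrix n n ℂ} (hσ : σ.PosSemidef) :
    ‖(M * σ).trace‖ ≤ ‖M‖ * σ.trace.re := by
  set s := CFC.sqrt σ with hs
  have hss : s * s = σ := CFC.sqrt_mul_sqrt_self σ hσ.nonneg
  have hsh : sᴴ = s := (Matrix.nonneg_iff_posSemidef.mp (CFC.sqrt_nonneg σ)).1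
  have hsym : ∀ a b, s a b = star (s b a) := fun a b => by
    conv_lhs => rw [← hsh]
    rw [Matrix.conjTranspose_apply]
  have term_le : ∀ v : n → ℂ,
      ‖dotProduct (star v) (M *ᵥ v)‖ ≤ ‖M‖ * ∑ j, ‖v j‖ ^ 2 := by
    intro v
    have hinner : (inner ℂ ((EuclideanSpace.equiv n ℂ).symm v)
        ((EuclideanSpace.equiv n ℂ).symm (M *ᵥ v)) : ℂ)
        = dotProduct (star v) (M *ᵥ v) := by
      rw [EuclideanSpace.inner_eq_star_dotProduct, dotProduct_comm]; rfl
    calc ‖dotProduct (star v) (M *ᵥ v)‖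
        = ‖(inner ℂ ((EuclideanSpace.equiv n ℂ).symm v)
            ((EuclideanSpace.equiv n ℂ).symm (M *ᵥ v)) : ℂ)‖ := by
          rw [hinner]
      _ ≤ ‖(EuclideanSpace.equiv n ℂ).symm v‖ * ‖(EuclideanSpace.equiv n ℂ).symm (M *ᵥ v)‖ :=
          norm_inner_le_norm _ _
      _ ≤ ‖(EuclideanSpace.equiv n ℂ).symm v‖ * (‖M‖ * ‖(EuclideanSpace.equiv n ℂ).symm v‖) :=
          mul_le_mul_of_nonneg_left (Matrix.l2_opNorm_mulVec M _) (norm_nonneg _)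
      _ = ‖M‖ * ∑ j, ‖v j‖ ^ 2 := by rw [← sq_norm_equiv]; ring
  have hdiag : ∀ i, (s * M * s) i i
      = dotProduct (star fun j => s j i) (M *ᵥ fun j => s j i) := by
    intro i
    simp only [Matrix.mul_apply, dotProduct, Matrix.mulVec, Pi.star_apply,
      Finset.sum_mul, Finset.mul_sum]
    rw [Finset.sum_comm]
    exact Finset.sum_congr rfl fun k _ => Finset.sum_congr rfl fun j _ => by
      rw [hsym i k]; ring
  have h1 : (M * σ).trace = (s * M * s).trace := by
    rw [← hss, ← mul_assoc, Matrix.trace_mul_comm, ← mul_assoc]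
  have h3 : σ.trace.re = ∑ i, ∑ j, ‖s j i‖ ^ 2 := by
    rw [← hss]
    simp only [Matrix.trace, Matrix.diag, Matrix.mul_apply, Complex.re_sum]
    exact Finset.sum_congr rfl fun i _ => Finset.sum_congr rfl fun j _ => by
      rw [hsym i j, star_mul_self_re]
  calc ‖(M * σ).trace‖
      = ‖∑ i, dotProduct (star fun j => s j i) (M *ᵥ fun j => s j i)‖ := by
        rw [h1, Matrix.trace]
        exact congrArg _ (Finset.sum_congr rfl fun i _ => hdiag i)
    _ ≤ ∑ i, ‖dotProduct (star fun j => s j i) (M *ᵥ fun j => s j i)‖ := by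
        exact norm_sum_le Finset.univ _
    _ ≤ ∑ i, ‖M‖ * ∑ j, ‖s j i‖ ^ 2 := Finset.sum_le_sum fun i _ => term_le _
    _ = ‖M‖ * σ.trace.re := by rw [h3, Finset.mul_sum]

lemma kraus_sum_one {α : Type*} [Fintype α] [DecidableEq α] (a₀ : α)
    (U : Matrix (α × n) (α × n) ℂ) (hU : U ∈ Matrix.unitaryGroup (α × n) ℂ)
    (Bf : α → Matrix n n ℂ) (hB : ∀ a i j, Bf a i j = U (a, i) (a₀, j)) :
    ∑ a, (Bf a)ᴴ * Bf a = 1 := by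
  have hU1 : Uᴴ * U = 1 := by
    rw [← Matrix.star_eq_conjTranspose]; exact Matrix.mem_unitaryGroup_iff'.mp hU
  ext i j
  have h := congrFun (congrFun hU1 (a₀, i)) (a₀, j)
  simp only [Matrix.mul_apply, Matrix.conjTranspose_apply] at h
  rw [Matrix.sum_apply]
  calc ∑ a, ((Bf a)ᴴ * Bf a) i j
      = ∑ a, ∑ k, star (U (a, k) (a₀, i)) * U (a, k) (a₀, j) := by
        refine Finset.sum_congr rfl fun a _ => ?_
        simp only [Matrix.mul_apply, Matrix.conjTranspose_apply, hB]
    _ = ∑ p : α × n, star (U p (a₀, i)) * U p (a₀, j) := by rw [Fintype.sum_prod_type]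
    _ = (1 : Matrix (α × n) (α × n) ℂ) (a₀, i) (a₀, j) := h
    _ = (1 : Matrix n n ℂ) i j := by simp [Matrix.one_apply, Prod.ext_iff]

lemma kron_one_conjTranspose {κ : Type*} [Fintype κ] [DecidableEq κ] (M : Matrix n n ℂ) :
    (M ⊗ₖ (1 : Matrix κ κ ℂ))ᴴ = Mᴴ ⊗ₖ (1 : Matrix κ κ ℂ) := by
  ext ⟨i, k⟩ ⟨j, l⟩
  simp [Matrix.conjTranspose_apply, Matrix.one_apply, apply_ite (star : ℂ → ℂ), eq_comm]

lemma kron_one_mul {κ : Type*} [Fintype κ] [DecidableEq κ] (M N : Matrix n n ℂ) :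
    (M ⊗ₖ (1 : Matrix κ κ ℂ)) * (N ⊗ₖ (1 : Matrix κ κ ℂ)) = (M * N) ⊗ₖ (1 : Matrix κ κ ℂ) := by
  rw [← Matrix.mul_kronecker_mul, one_mul]

lemma kron_one_sub {κ : Type*} [Fintype κ] [DecidableEq κ] (M N : Matrix n n ℂ) :
    (M - N) ⊗ₖ (1 : Matrix κ κ ℂ) = M ⊗ₖ (1 : Matrix κ κ ℂ) - N ⊗ₖ (1 : Matrix κ κ ℂ) := by
  ext ⟨i, k⟩ ⟨j, l⟩
  simp [Matrix.sub_apply, sub_mul]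

lemma kron_one_sum {α : Type*} [Fintype α] {κ : Type*} [Fintype κ] [DecidableEq κ]
    (f : α → Matrix n n ℂ) :
    (∑ a, f a) ⊗ₖ (1 : Matrix κ κ ℂ) = ∑ a, (f a) ⊗ₖ (1 : Matrix κ κ ℂ) := by
  ext ⟨i, k⟩ ⟨j, l⟩
  simp [Matrix.sum_apply, Finset.sum_mul]

end TN

namespace TN
variable {n : Type*} [Fintype n] [DecidableEq n]
open scoped MatrixOrder

lemma conj_diag_mul {U : Matrix n n ℂ} (hU : U ∈ Matrix.unitaryGroup n ℂ) (d e : n → ℂ) :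
    (U * Matrix.diagonal d * star U) * (U * Matrix.diagonal e * star U)
      = U * Matrix.diagonal (d * e) * star U := by
  have h : star U * U = 1 := Matrix.mem_unitaryGroup_iff'.mp hU
  simp only [Matrix.mul_assoc]
  rw [show star U * (U * (Matrix.diagonal e * star U)) = Matrix.diagonal e * star U by
    rw [← Matrix.mul_assoc, h, Matrix.one_mul]]
  rw [← Matrix.mul_assoc (Matrix.diagonal d) (Matrix.diagonal e), Matrix.diagonal_mul_diagonal]
  rfl

lemma trace_conj {U : Matrix n n ℂ} (hU : U ∈ Matrix.unitaryGroup n ℂ) (D : Matrix n n ℂ) :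
    (U * D * star U).trace = D.trace := by
  rw [Matrix.trace_mul_cycle, Matrix.mem_unitaryGroup_iff'.mp hU, Matrix.one_mul]

lemma traceNorm_eq_re_trace_sqrt (M : Matrix n n ℂ) :
    traceNorm M = ((CFC.sqrt (Mᴴ * Mᴴᴴ)).trace).re := by
  set hP := Matrix.posSemidef_self_mul_conjTranspose Mᴴ with hPdef
  have hsq : CFC.sqrt (Mᴴ * Mᴴᴴ) = (hP.1.eigenvectorUnitary : Matrix n n ℂ)
      * Matrix.diagonal ((↑) ∘ Real.sqrt ∘ hP.1.eigenvalues)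
      * star (hP.1.eigenvectorUnitary : Matrix n n ℂ) := by
    rw [CFC.sqrt_eq_cfc, cfc_nnreal_eq_real _ (Mᴴ * Mᴴᴴ), hP.1.cfc_eq]
    simp only [Matrix.IsHermitian.cfc, Unitary.conjStarAlgAut_apply]
    congr 3
    funext i
    simp only [Function.comp_apply, Real.coe_sqrt, Real.coe_toNNReal']
    congr 2
    exact max_eq_left (hP.eigenvalues_nonneg i)
  rw [hsq, trace_conj hP.1.eigenvectorUnitary.2, Matrix.trace_diagonal]
  simp only [Function.comp_apply, Complex.re_sum, Complex.ofReal_re]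
  rfl

lemma exists_contraction_trace {D : Matrix n n ℂ} (hD : D.IsHermitian) :
    ∃ C : Matrix n n ℂ, ‖C‖ ≤ 1 ∧ traceNorm D = ((C * D).trace).re := by
  set U : Matrix n n ℂ := (hD.eigenvectorUnitary : Matrix n n ℂ) with hUdef
  have hUmem : U ∈ Matrix.unitaryGroup n ℂ := hD.eigenvectorUnitary.2
  set μ := hD.eigenvalues with hμ
  have hdiagmem :
      Matrix.diagonal (fun i => ((if 0 ≤ μ i then (1 : ℝ) else -1 : ℝ) : ℂ))
        ∈ Matrix.unitaryGroup n ℂ := by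
    rw [Matrix.mem_unitaryGroup_iff', Matrix.star_eq_conjTranspose,
      Matrix.diagonal_conjTranspose, Matrix.diagonal_mul_diagonal]
    ext i j
    by_cases hij : i = j
    · subst hij
      simp only [Matrix.diagonal_apply_eq, Matrix.one_apply_eq]
      split_ifs with h <;> norm_num [h]
    · simp [Matrix.diagonal_apply_ne _ hij, Matrix.one_apply_ne hij]
  set C := U * Matrix.diagonal (fun i => ((if 0 ≤ μ i then (1 : ℝ) else -1 : ℝ) : ℂ)) * star U
    with hC
  have hCmem : C ∈ Matrix.unitaryGroup n ℂ :=
    mul_mem (mul_mem hUmem hdiagmem) (Unitary.star_mem hUmem)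
  have hspec : D = U * Matrix.diagonal (fun i => (μ i : ℂ)) * star U := by
    have hst := hD.spectral_theorem
    rw [Unitary.conjStarAlgAut_apply] at hst
    exact hst
  set R := U * Matrix.diagonal (fun i => ((|μ i| : ℝ) : ℂ)) * star U with hR
  have hfun1 : (fun i => ((if 0 ≤ μ i then (1 : ℝ) else -1 : ℝ) : ℂ)) * (fun i => (μ i : ℂ))
      = fun i => ((|μ i| : ℝ) : ℂ) := by
    funext i
    simp only [Pi.mul_apply]
    split_ifs with h
    · rw [abs_of_nonneg h]; norm_num
    · rw [abs_of_neg (lt_of_not_ge h)]; push_cast; ring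
  have hfun2 : (fun i => ((|μ i| : ℝ) : ℂ)) * (fun i => ((|μ i| : ℝ) : ℂ))
      = (fun i => (μ i : ℂ)) * (fun i => (μ i : ℂ)) := by
    funext i
    simp only [Pi.mul_apply, ← Complex.ofReal_mul, abs_mul_abs_self]
  have h1 : C * D = R := by
    rw [hC, hspec, conj_diag_mul hUmem, hfun1]
  have h2 : R.PosSemidef := by
    rw [hR, Matrix.star_eq_conjTranspose]
    exact Matrix.PosSemidef.mul_mul_conjTranspose_same
      (Matrix.posSemidef_diagonal_iff.mpr fun i => Complex.zero_le_real.mpr (abs_nonneg _)) U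
  have h3 : R ^ 2 = Dᴴ * Dᴴᴴ := by
    rw [Matrix.conjTranspose_conjTranspose, hD.eq, pow_two, hR, conj_diag_mul hUmem, hfun2]
    conv_rhs => rw [hspec, conj_diag_mul hUmem]
  have h4 : R = CFC.sqrt (Dᴴ * Dᴴᴴ) :=
    (CFC.sqrt_unique (by rw [← pow_two]; exact h3) h2.nonneg).symm
  exact ⟨C, l2_opNorm_unitary hCmem, by rw [traceNorm_eq_re_trace_sqrt, ← h4, h1]⟩

end TN

namespace TN
variable {n : Type*} [Fintype n] [DecidableEq n]

lemma posSemidef_sum {α : Type*} (s : Finset α) (f : α → Matrix n n ℂ)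
    (h : ∀ a ∈ s, (f a).PosSemidef) : (∑ a ∈ s, f a).PosSemidef :=
  Finset.sum_induction f _ (fun _ _ ha hb => ha.add hb) Matrix.PosSemidef.zero h

lemma trace_re_nonneg {S : Matrix n n ℂ} (hS : S.PosSemidef) : 0 ≤ S.trace.re := by
  rw [Matrix.trace, Complex.re_sum]
  refine Finset.sum_nonneg fun i _ => ?_
  have h := hS.re_dotProduct_nonneg (Pi.single i 1)
  have hd : dotProduct (star (Pi.single i 1)) (S *ᵥ Pi.single i 1) = S i i := by
    rw [Matrix.mulVec_single]
    simp [dotProduct, Pi.single_apply, apply_ite (star : ℂ → ℂ), ite_mul,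
      Finset.sum_ite_eq, Finset.sum_ite_eq']
  rwa [hd] at h

lemma norm_mul3_le {X Y Z : Matrix n n ℂ} {x y z : ℝ} (hX : ‖X‖ ≤ x) (hY : ‖Y‖ ≤ y)
    (hZ : ‖Z‖ ≤ z) (hy : 0 ≤ y) (hz : 0 ≤ z) : ‖X * Y * Z‖ ≤ x * y * z := by
  have hx : 0 ≤ x := le_trans (norm_nonneg _) hX
  calc ‖X * Y * Z‖ ≤ ‖X * Y‖ * ‖Z‖ := Matrix.l2_opNorm_mul _ _
    _ ≤ (x * y) * z := by
      refine mul_le_mul ?_ hZ (norm_nonneg _) (by positivity)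
      calc ‖X * Y‖ ≤ ‖X‖ * ‖Y‖ := Matrix.l2_opNorm_mul _ _
        _ ≤ x * y := mul_le_mul hX hY (norm_nonneg _) hx

end TN


end Helpers

open TN
set_option maxHeartbeats 1000000 in
/-- If a unitary `U_A` block-encodes `A` (in the ancilla block labelled `a₀`) and
`‖A − V‖ ≤ ε` for a unitary `V`, then the channel obtained by initializing the ancillae
to `a₀`, applying `U_A` and tracing out the ancillae — whose Kraus operators are the
blocks `B a := (⟨a|⊗I) U_A (|a₀⟩⊗I)` — is `4ε`-close in diamond norm to conjugation
by `V`: tensored with an identity, its output on any density matrix `σ` is within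
`4ε` in trace norm of `(V⊗1)σ(V⊗1)†`. -/
theorem blockEncoding_channel_close {ι κ α : Type*}
    [Fintype ι] [DecidableEq ι] [Fintype κ] [DecidableEq κ]
    [Fintype α] [DecidableEq α] (a₀ : α)
    (U_A : Matrix (α × ι) (α × ι) ℂ) (hU : U_A ∈ Matrix.unitaryGroup (α × ι) ℂ)
    (V : Matrix ι ι ℂ) (hV : V ∈ Matrix.unitaryGroup ι ℂ)
    (ε : ℝ)
    (A : Matrix ι ι ℂ) (hA : A = fun i j => U_A (a₀, i) (a₀, j))
    (hAV : ‖A - V‖ ≤ ε)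
    (B : α → Matrix ι ι ℂ) (hB : ∀ a, B a = fun i j => U_A (a, i) (a₀, j))
    (σ : Matrix (ι × κ) (ι × κ) ℂ) (hσ : σ.PosSemidef) (hσtr : σ.trace = 1) :
    traceNorm ((∑ a : α, (B a ⊗ₖ (1 : Matrix κ κ ℂ)) * σ * (B a ⊗ₖ (1 : Matrix κ κ ℂ))ᴴ)
        - (V ⊗ₖ (1 : Matrix κ κ ℂ)) * σ * (V ⊗ₖ (1 : Matrix κ κ ℂ))ᴴ)
      ≤ 4 * ε := by
  have hε : 0 ≤ ε := le_trans (norm_nonneg _) hAV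
  have hretr : σ.trace.re = 1 := by rw [hσtr]; exact Complex.one_re
  set At : Matrix (ι × κ) (ι × κ) ℂ := A ⊗ₖ (1 : Matrix κ κ ℂ) with hAt
  set Vt : Matrix (ι × κ) (ι × κ) ℂ := V ⊗ₖ (1 : Matrix κ κ ℂ) with hVt
  set Bt : α → Matrix (ι × κ) (ι × κ) ℂ := fun a => (B a) ⊗ₖ (1 : Matrix κ κ ℂ) with hBt
  -- norm bounds
  have hA1 : ‖A‖ ≤ 1 := l2_opNorm_block a₀ U_A hU A (fun i j => by rw [hA])
  have hAt1 : ‖At‖ ≤ 1 := le_trans (l2_opNorm_kron_one A) hA1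
  have hVt1 : ‖Vt‖ ≤ 1 := le_trans (l2_opNorm_kron_one V) (l2_opNorm_unitary hV)
  have hsub : At - Vt = (A - V) ⊗ₖ (1 : Matrix κ κ ℂ) := (kron_one_sub A V).symm
  have hE1 : ‖At - Vt‖ ≤ ε := by rw [hsub]; exact le_trans (l2_opNorm_kron_one _) hAV
  have hAtH : ‖Atᴴ‖ ≤ 1 := by rw [Matrix.l2_opNorm_conjTranspose]; exact hAt1
  have hVtH : ‖Vtᴴ‖ ≤ 1 := by rw [Matrix.l2_opNorm_conjTranspose]; exact hVt1
  have hEH : ‖(At - Vt)ᴴ‖ ≤ ε := by rw [Matrix.l2_opNorm_conjTranspose]; exact hE1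
  -- the target matrix
  set D : Matrix (ι × κ) (ι × κ) ℂ := (∑ a : α, Bt a * σ * (Bt a)ᴴ) - Vt * σ * Vtᴴ with hD
  set S : Matrix (ι × κ) (ι × κ) ℂ := (∑ a : α, Bt a * σ * (Bt a)ᴴ) - At * σ * Atᴴ with hS
  have hAB : At = Bt a₀ := by simp only [hAt, hBt, hA, hB]
  have hSsum : S = ∑ a ∈ Finset.univ.erase a₀, Bt a * σ * (Bt a)ᴴ := by
    rw [hS, ← Finset.add_sum_erase _ _ (Finset.mem_univ a₀), ← hAB]
    exact add_sub_cancel_left _ _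
  have hSpsd : S.PosSemidef := by
    rw [hSsum]
    exact posSemidef_sum _ _ fun a _ => hσ.mul_mul_conjTranspose_same (Bt a)
  have hDherm : D.IsHermitian := by
    refine Matrix.IsHermitian.sub ?_ (hσ.mul_mul_conjTranspose_same Vt).1
    exact (posSemidef_sum Finset.univ _ fun a _ => hσ.mul_mul_conjTranspose_same (Bt a)).1
  -- decomposition
  have hdecomp : D = S + (At - Vt) * σ * Atᴴ + Vt * σ * (At - Vt)ᴴ := by
    rw [hD, hS]
    simp only [Matrix.conjTranspose_sub, Matrix.sub_mul, Matrix.mul_sub]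
    abel
  -- completeness of Kraus operators
  have hkraus : ∑ a : α, (Bt a)ᴴ * Bt a = 1 := by
    have h0 : ∑ a : α, (B a)ᴴ * B a = 1 :=
      kraus_sum_one a₀ U_A hU B (fun a i j => by rw [hB a])
    calc ∑ a : α, (Bt a)ᴴ * Bt a
        = ∑ a : α, ((B a)ᴴ * B a) ⊗ₖ (1 : Matrix κ κ ℂ) := by
          refine Finset.sum_congr rfl fun a _ => ?_
          rw [hBt, kron_one_conjTranspose, kron_one_mul]
      _ = (∑ a : α, (B a)ᴴ * B a) ⊗ₖ (1 : Matrix κ κ ℂ) := (kron_one_sum _).symm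
      _ = 1 := by rw [h0, Matrix.one_kronecker_one]
  have hVV : Vtᴴ * Vt = 1 := by
    rw [hVt, kron_one_conjTranspose, kron_one_mul, ← Matrix.star_eq_conjTranspose,
      Matrix.mem_unitaryGroup_iff'.mp hV, Matrix.one_kronecker_one]
  -- trace of S
  have htrXσX : ∀ X : Matrix (ι × κ) (ι × κ) ℂ, (X * σ * Xᴴ).trace = (Xᴴ * X * σ).trace :=
    fun X => Matrix.trace_mul_cycle X σ Xᴴ
  have hAA : Atᴴ * At = 1 + (Vtᴴ * (At - Vt) + (At - Vt)ᴴ * At) := by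
    simp only [Matrix.conjTranspose_sub, Matrix.mul_sub, Matrix.sub_mul]
    rw [hVV]
    abel
  have htrS : S.trace = -(((Vtᴴ * (At - Vt)) * σ).trace + (((At - Vt)ᴴ * At) * σ).trace) := by
    rw [hS, Matrix.trace_sub, Matrix.trace_sum]
    rw [Finset.sum_congr rfl fun a _ => htrXσX (Bt a), htrXσX At]
    rw [← Matrix.trace_sum, ← Finset.sum_mul, hkraus, Matrix.one_mul]
    rw [hAA, Matrix.add_mul, Matrix.add_mul, Matrix.one_mul, Matrix.trace_add,
      Matrix.trace_add]
    ring
  have htrS_le : S.trace.re ≤ 2 * ε := by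
    calc S.trace.re ≤ ‖S.trace‖ := Complex.re_le_norm _
      _ ≤ ‖((Vtᴴ * (At - Vt)) * σ).trace‖
          + ‖(((At - Vt)ᴴ * At) * σ).trace‖ := by
        rw [htrS, norm_neg]
        exact norm_add_le _ _
      _ ≤ (1 * ε) * σ.trace.re + (ε * 1) * σ.trace.re := by
        refine add_le_add ?_ ?_
        · refine le_trans (trace_bound hσ) ?_
          refine mul_le_mul_of_nonneg_right ?_ (by rw [hretr]; norm_num)
          calc ‖Vtᴴ * (At - Vt)‖ ≤ ‖Vtᴴ‖ * ‖At - Vt‖ := Matrix.l2_opNorm_mul _ _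
            _ ≤ 1 * ε := mul_le_mul hVtH hE1 (norm_nonneg _) zero_le_one
        · refine le_trans (trace_bound hσ) ?_
          refine mul_le_mul_of_nonneg_right ?_ (by rw [hretr]; norm_num)
          calc ‖(At - Vt)ᴴ * At‖ ≤ ‖(At - Vt)ᴴ‖ * ‖At‖ := Matrix.l2_opNorm_mul _ _
            _ ≤ ε * 1 := mul_le_mul hEH hAt1 (norm_nonneg _) hε
      _ = 2 * ε := by rw [hretr]; ring
  -- the contraction C
  obtain ⟨C, hC1, hC2⟩ := exists_contraction_trace hDherm
  -- bounds on the three trace terms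
  have hterm1 : ‖(C * S).trace‖ ≤ 2 * ε := by
    refine le_trans (trace_bound hSpsd) ?_
    calc ‖C‖ * S.trace.re ≤ 1 * S.trace.re :=
          mul_le_mul_of_nonneg_right hC1 (trace_re_nonneg hSpsd)
      _ = S.trace.re := one_mul _
      _ ≤ 2 * ε := htrS_le
  have hcyc : ∀ X Y : Matrix (ι × κ) (ι × κ) ℂ,
      (C * (X * σ * Y)).trace = ((Y * (C * X)) * σ).trace := by
    intro X Y
    rw [show C * (X * σ * Y) = (C * X) * σ * Y by simp only [Matrix.mul_assoc]]
    exact Matrix.trace_mul_cycle (C * X) σ Y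
  have hterm2 : ‖(C * ((At - Vt) * σ * Atᴴ)).trace‖ ≤ ε := by
    rw [hcyc]
    refine le_trans (trace_bound hσ) ?_
    rw [hretr, mul_one]
    calc ‖Atᴴ * (C * (At - Vt))‖ = ‖Atᴴ * C * (At - Vt)‖ := by rw [Matrix.mul_assoc]
      _ ≤ 1 * 1 * ε := norm_mul3_le hAtH hC1 hE1 zero_le_one hε
      _ = ε := by ring
  have hterm3 : ‖(C * (Vt * σ * (At - Vt)ᴴ)).trace‖ ≤ ε := by
    rw [hcyc]
    refine le_trans (trace_bound hσ) ?_
    rw [hretr, mul_one]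
    calc ‖(At - Vt)ᴴ * (C * Vt)‖ = ‖(At - Vt)ᴴ * C * Vt‖ := by rw [Matrix.mul_assoc]
      _ ≤ ε * 1 * 1 := norm_mul3_le hEH hC1 hVt1 zero_le_one zero_le_one
      _ = ε := by ring
  -- assemble
  have hsplit : (C * D).trace = (C * S).trace + (C * ((At - Vt) * σ * Atᴴ)).trace
      + (C * (Vt * σ * (At - Vt)ᴴ)).trace := by
    rw [hdecomp, Matrix.mul_add, Matrix.mul_add, Matrix.trace_add, Matrix.trace_add]
  calc traceNorm D = ((C * D).trace).re := hC2
    _ ≤ ‖(C * D).trace‖ := Complex.re_le_norm _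
    _ ≤ ‖(C * S).trace‖ + ‖(C * ((At - Vt) * σ * Atᴴ)).trace‖
        + ‖(C * (Vt * σ * (At - Vt)ᴴ)).trace‖ := by
      rw [hsplit]
      exact le_trans (norm_add_le _ _) (add_le_add_left (norm_add_le _ _) _)
    _ ≤ 2 * ε + ε + ε := add_le_add (add_le_add hterm1 hterm2) hterm3
    _ = 4 * ε := by ring
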